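/- Let $(X_n)_{n \in \mathbb{N}}$ be a family of measurable spaces and let $(\kappa_n)_{n \in \mathbb{N}}$ be a family of Markov kernels such that for each $n$, $\kappa_n$ is a kernel from $\prod_{i=0}^n X_i$ to $X_{n+1}$. Then there exists a unique Markov kernel $\xi$ from $X_0$ to $\prod_{i=1}^{\infty} X_i$ such that for every $n \ge 1$, the pushforward of $\xi$ under the projection onto the first $n$ coordinates equals the iterated composition-product $\kappa_0 \otimes_k \cdots \otimes_k \kappa_{n-1}$. (Ionescu-Tulcea theorem.) -/

import Mathlib

open MeasureTheory ProbabilityTheory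
open scoped ENNReal NNReal
open Set Function

variable {X : ℕ → Type*} [∀ n, MeasurableSpace (X n)]

/-- The iterated composition-product `κ 0 ⊗ₖ κ 1 ⊗ₖ ⋯ ⊗ₖ κ (n - 1)` of a family of kernels
`κ n : (Π i ≤ n, X i) ↝ X (n + 1)`, as a kernel from `X 0` to `Π i : Fin n, X (i + 1)`,
i.e. a kernel from `X 0` to `∏_{i=1}^n X i`. -/
noncomputable def iteratedCompProd
    (κ : ∀ n, Kernel (Π i : Fin (n + 1), X i) (X (n + 1))) :
    ∀ n : ℕ, Kernel (X 0) (Π i : Fin n, X (i + 1))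
  | 0 => Kernel.deterministic (fun _ ↦ (fun i : Fin 0 ↦ i.elim0)) measurable_const
  | (n + 1) =>
      (iteratedCompProd κ n ⊗ₖ
          (κ n).comap
            (fun p : X 0 × (Π i : Fin n, X (i + 1)) ↦
              fun i : Fin (n + 1) ↦
                Fin.cases (motive := fun i : Fin (n + 1) ↦ X i) p.1 (fun j ↦ p.2 j) i)
            (by
              refine measurable_pi_lambda _ (fun i ↦ ?_)
              induction i using Fin.cases with
              | zero => exact measurable_fst
              | succ j => exact (measurable_pi_apply j).comp measurable_snd)).map
        (fun p : (Π i : Fin n, X (i + 1)) × X (n + 1) ↦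
          fun i : Fin (n + 1) ↦
            Fin.lastCases (motive := fun i : Fin (n + 1) ↦ X (i + 1)) p.2 (fun j ↦ p.1 j) i)


set_option linter.unusedSectionVars false
namespace IonescuTulceaProof


variable {X : ℕ → Type*} [∀ n, MeasurableSpace (X n)]

/-- prefix space -/
abbrev Pre (X : ℕ → Type*) (n : ℕ) : Type _ := Π i : Fin n, X (i + 1)

def trunc {m n : ℕ} (h : n ≤ m) : Pre X m → Pre X n := fun y i => y (Fin.castLE h i)

lemma measurable_trunc {m n : ℕ} (h : n ≤ m) : Measurable (trunc (X := X) h) :=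
  measurable_pi_lambda _ fun _ => measurable_pi_apply _

@[simp] lemma trunc_self {m : ℕ} : trunc (X := X) (le_refl m) = id := rfl

lemma trunc_trunc {m n p : ℕ} (h1 : p ≤ n) (h2 : n ≤ m) :
    trunc (X := X) h1 ∘ trunc h2 = trunc (h1.trans h2) := rfl

def res (n : ℕ) : (Π i : ℕ, X (i + 1)) → Pre X n := fun f i => f i

lemma measurable_res (n : ℕ) : Measurable (res (X := X) n) :=
  measurable_pi_lambda _ fun _ => measurable_pi_apply _

lemma trunc_res {m n : ℕ} (h : n ≤ m) (f : Π i : ℕ, X (i + 1)) :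
    trunc h (res m f) = res n f := rfl

lemma kernel_map_map {α β γ δ : Type*} [MeasurableSpace α] [MeasurableSpace β]
    [MeasurableSpace γ] [MeasurableSpace δ]
    (κ : Kernel α β) {f : β → γ} {g : γ → δ} (hf : Measurable f) (hg : Measurable g) :
    (κ.map f).map g = κ.map (g ∘ f) := by
  ext a : 1
  rw [Kernel.map_apply _ hg, Kernel.map_apply _ hf, Kernel.map_apply _ (hg.comp hf),
    Measure.map_map hg hf]

/-- the "append one coordinate" embedding used in `iteratedCompProd`. -/
def el (n : ℕ) : Pre X n × X (n + 1) → Pre X (n + 1) := fun p i =>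
  Fin.lastCases (motive := fun i : Fin (n + 1) ↦ X (i + 1)) p.2 (fun j ↦ p.1 j) i

lemma measurable_el (n : ℕ) : Measurable (el (X := X) n) := by
  refine measurable_pi_lambda _ (fun i => ?_)
  induction i using Fin.lastCases with
  | last => simpa [el] using measurable_snd
  | cast j => simp only [el, Fin.lastCases_castSucc]; exact (measurable_pi_apply j).comp measurable_fst

@[simp] lemma el_castSucc {n : ℕ} (p : Pre X n × X (n + 1)) (j : Fin n) :
    el n p (Fin.castSucc j) = p.1 j := by simp [el]

@[simp] lemma el_last {n : ℕ} (p : Pre X n × X (n + 1)) :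
    el n p (Fin.last n) = p.2 := by simp [el]

lemma trunc_el {n : ℕ} (p : Pre X n × X (n + 1)) :
    trunc (Nat.le_succ n) (el n p) = p.1 := by
  funext i
  exact el_castSucc p i


section ITCP
variable (κ : ∀ n, Kernel (Π i : Fin (n + 1), X i) (X (n + 1)))

def g0 (n : ℕ) : X 0 × Pre X n → Π i : Fin (n + 1), X i := fun p i =>
  Fin.cases (motive := fun i : Fin (n + 1) ↦ X i) p.1 (fun j ↦ p.2 j) i

lemma measurable_g0 (n : ℕ) : Measurable (g0 (X := X) n) := by
  refine measurable_pi_lambda _ (fun i => ?_)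
  induction i using Fin.cases with
  | zero => exact measurable_fst
  | succ j => exact (measurable_pi_apply j).comp measurable_snd

/-- the kernel `κ n` seen as a kernel from `X 0 × Pre X n`. -/
noncomputable def auxk (n : ℕ) : Kernel (X 0 × Pre X n) (X (n + 1)) :=
  (κ n).comap (g0 n) (measurable_g0 n)

lemma auxk_isMarkov (hκ : ∀ n, IsMarkovKernel (κ n)) (n : ℕ) : IsMarkovKernel (auxk κ n) := by
  have := hκ n; rw [auxk]; infer_instance

lemma itcp_succ (n : ℕ) :
    iteratedCompProd κ (n + 1) = ((iteratedCompProd κ n) ⊗ₖ auxk κ n).map (el n) := rfl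

lemma itcp_isMarkov (hκ : ∀ n, IsMarkovKernel (κ n)) :
    ∀ n, IsMarkovKernel (iteratedCompProd κ n)
  | 0 => by rw [iteratedCompProd]; infer_instance
  | (n + 1) => by
      have := itcp_isMarkov hκ n
      have := auxk_isMarkov κ hκ n
      rw [itcp_succ]
      exact Kernel.IsMarkovKernel.map _ (measurable_el n)

lemma itcp_map_trunc_succ (hκ : ∀ n, IsMarkovKernel (κ n)) (n : ℕ) :
    (iteratedCompProd κ (n + 1)).map (trunc (Nat.le_succ n)) = iteratedCompProd κ n := by
  have h1 := itcp_isMarkov κ hκ n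
  have h2 := auxk_isMarkov κ hκ n
  rw [itcp_succ, kernel_map_map _ (measurable_el n) (measurable_trunc _)]
  have : trunc (X := X) (Nat.le_succ n) ∘ el n = Prod.fst := funext fun p => trunc_el p
  rw [this, ← Kernel.fst_eq, Kernel.fst_compProd]

lemma itcp_map_trunc (hκ : ∀ n, IsMarkovKernel (κ n)) {n m : ℕ} (h : n ≤ m) :
    (iteratedCompProd κ m).map (trunc h) = iteratedCompProd κ n := by
  induction m, h using Nat.le_induction with
  | base => simp
  | succ m hnm ih =>
      rw [← trunc_trunc hnm (Nat.le_succ m), ← kernel_map_map _ (measurable_trunc _)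
        (measurable_trunc _), itcp_map_trunc_succ κ hκ m, ih]

end ITCP



section Chain
variable (κ : ∀ n, Kernel (Π i : Fin (n + 1), X i) (X (n + 1))) (x : X 0)

/-- one transition step of the chain started at `x`, as a kernel between prefix spaces. -/
noncomputable def stepk (m : ℕ) : Kernel (Pre X m) (Pre X (m + 1)) :=
  (Kernel.id ⊗ₖ ((auxk κ m).comap (fun p : Pre X m × Pre X m => (x, p.2))
      (measurable_const.prodMk measurable_snd))).map (el m)

lemma stepk_isMarkov (hκ : ∀ n, IsMarkovKernel (κ n)) (m : ℕ) :
    IsMarkovKernel (stepk κ x m) := by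
  have := auxk_isMarkov κ hκ m
  exact Kernel.IsMarkovKernel.map _ (measurable_el m)

lemma stepk_apply (hκ : ∀ n, IsMarkovKernel (κ n)) (m : ℕ) (y : Pre X m) :
    stepk κ x m y = (auxk κ m (x, y)).map (fun z => el m (y, z)) := by
  have hma := auxk_isMarkov κ hκ m
  have hη : Measurable fun p : Pre X m × Pre X m => ((x, p.2) : X 0 × Pre X m) :=
    measurable_const.prodMk measurable_snd
  ext s hs
  have hc : Measurable fun z : X (m + 1) => el m (y, z) :=
    (measurable_el m).comp measurable_prodMk_left
  have hmeas : Measurable fun b : Pre X m =>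
      ((auxk κ m).comap _ hη) (y, b) (Prod.mk b ⁻¹' (el m ⁻¹' s)) := by
    have := Kernel.measurable_kernel_prodMk_left
      (κ := ((auxk κ m).comap _ hη).comap (fun b : Pre X m => (y, b)) measurable_prodMk_left)
      (measurable_el m hs)
    simpa [Kernel.comap_apply, Set.preimage] using this
  rw [stepk, Kernel.map_apply' _ (measurable_el m) _ hs,
    Kernel.compProd_apply (measurable_el m hs), Kernel.id_apply,
    lintegral_dirac' y hmeas, Kernel.comap_apply, Measure.map_apply hc hs]
  rfl

/-- the chain kernel from time `m` to time `n` (for `n ≤ m` it is the deterministic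
truncation). -/
noncomputable def chain (m : ℕ) : ∀ n : ℕ, Kernel (Pre X m) (Pre X n)
  | 0 => Kernel.deterministic (fun _ => (fun i : Fin 0 => i.elim0)) measurable_const
  | (n + 1) =>
      if h : n + 1 ≤ m then Kernel.deterministic (trunc h) (measurable_trunc h)
      else stepk κ x n ∘ₖ chain m n

lemma chain_succ {m n : ℕ} (h : m ≤ n) :
    chain κ x m (n + 1) = stepk κ x n ∘ₖ chain κ x m n := by
  rw [chain, dif_neg (by omega)]

lemma chain_self (m : ℕ) : chain κ x m m = Kernel.id := by
  cases m with
  | zero =>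
      ext y : 1
      rw [chain, Kernel.deterministic_apply, Kernel.id_apply]
      congr 1
      funext i
      exact i.elim0
  | succ m =>
      rw [chain, dif_pos le_rfl]
      rfl

lemma chain_isMarkov (hκ : ∀ n, IsMarkovKernel (κ n)) (m : ℕ) :
    ∀ n, IsMarkovKernel (chain κ x m n)
  | 0 => by rw [chain]; infer_instance
  | (n + 1) => by
      rw [chain]
      split
      · infer_instance
      · have := chain_isMarkov hκ m n
        have := stepk_isMarkov κ x hκ n
        infer_instance

lemma stepk_map_trunc (hκ : ∀ n, IsMarkovKernel (κ n)) (n : ℕ) :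
    (stepk κ x n).map (trunc (Nat.le_succ n)) = Kernel.id := by
  have hma := auxk_isMarkov κ hκ n
  ext y : 1
  have hc : Measurable fun z : X (n + 1) => el n (y, z) :=
    (measurable_el n).comp measurable_prodMk_left
  rw [Kernel.map_apply _ (measurable_trunc _), stepk_apply κ x hκ,
    Measure.map_map (measurable_trunc _) hc]
  have : (trunc (X := X) (Nat.le_succ n) ∘ fun z => el n (y, z)) = fun _ => y := by
    funext z; exact trunc_el (y, z)
  rw [this, Measure.map_const, measure_univ, one_smul, Kernel.id_apply]

lemma chain_map_trunc_succ (hκ : ∀ n, IsMarkovKernel (κ n)) {m n : ℕ} (h : m ≤ n) :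
    (chain κ x m (n + 1)).map (trunc (Nat.le_succ n)) = chain κ x m n := by
  rw [chain_succ κ x h, Kernel.map_comp, stepk_map_trunc κ x hκ, Kernel.id_comp]

lemma chain_comp (hκ : ∀ n, IsMarkovKernel (κ n)) {m n : ℕ} (h : m + 1 ≤ n) :
    chain κ x m n = chain κ x (m + 1) n ∘ₖ stepk κ x m := by
  induction n, h using Nat.le_induction with
  | base =>
      rw [chain_succ κ x le_rfl, chain_self, chain_self, Kernel.comp_id, Kernel.id_comp]
  | succ n hmn ih =>
      have := stepk_isMarkov κ x hκ m
      have := stepk_isMarkov κ x hκ n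
      have := chain_isMarkov κ x hκ (m + 1) n
      rw [chain_succ κ x (by omega), chain_succ κ x (by omega), ih, Kernel.comp_assoc]

/-- base point of `Pre X 0`. -/
def z0 : Pre X 0 := fun i => i.elim0

lemma itcp_eq_chain (hκ : ∀ n, IsMarkovKernel (κ n)) :
    ∀ n, iteratedCompProd κ n x = chain κ x 0 n z0
  | 0 => by
      rw [iteratedCompProd, chain_self, Kernel.id_apply, Kernel.deterministic_apply]
      rfl
  | (n + 1) => by
      have h1 := itcp_isMarkov κ hκ n
      have h2 := auxk_isMarkov κ hκ n
      have h3 := chain_isMarkov κ x hκ 0 n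
      have h4 := stepk_isMarkov κ x hκ n
      rw [chain_succ κ x (Nat.zero_le n), itcp_succ, Kernel.map_apply _ (measurable_el n),
        Kernel.comp_apply, ← itcp_eq_chain hκ n]
      ext s hs
      rw [Measure.map_apply (measurable_el n) hs, Kernel.compProd_apply (measurable_el n hs),
        Measure.bind_apply hs (Kernel.measurable _).aemeasurable]
      refine lintegral_congr fun y => ?_
      have hc : Measurable fun z : X (n + 1) => el n (y, z) :=
        (measurable_el n).comp measurable_prodMk_left
      rw [stepk_apply κ x hκ, Measure.map_apply hc hs]
      rfl

end Chain

section Key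
variable (κ : ∀ n, Kernel (Π i : Fin (n + 1), X i) (X (n + 1))) (x : X 0)
  (S : ∀ n, Set (Pre X n))

/-- probability, given the trajectory up to time `m`, that the trajectory up to time `n`
lies in `S n`. -/
noncomputable def F (m n : ℕ) (y : Pre X m) : ℝ≥0∞ := chain κ x m n y (S n)

noncomputable def hfun (m : ℕ) (y : Pre X m) : ℝ≥0∞ := ⨅ k, F κ x S m (m + k) y

variable {κ x S}
variable (hκ : ∀ n, IsMarkovKernel (κ n)) (hS : ∀ n, MeasurableSet (S n))
  (hdec : ∀ n, S (n + 1) ⊆ trunc (Nat.le_succ n) ⁻¹' S n)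

include hκ

lemma F_le_one (m n : ℕ) (y : Pre X m) : F κ x S m n y ≤ 1 := by
  have := chain_isMarkov κ x hκ m n
  exact prob_le_one

omit hκ in
include hS in
lemma measurable_F (m n : ℕ) : Measurable (F κ x S m n) :=
  Kernel.measurable_coe _ (hS n)

include hS hdec in
lemma F_succ_le {m n : ℕ} (h : m ≤ n) (y : Pre X m) :
    F κ x S m (n + 1) y ≤ F κ x S m n y := by
  calc chain κ x m (n + 1) y (S (n + 1))
      ≤ chain κ x m (n + 1) y (trunc (Nat.le_succ n) ⁻¹' S n) := measure_mono (hdec n)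
    _ = (chain κ x m (n + 1)).map (trunc (Nat.le_succ n)) y (S n) :=
        (Kernel.map_apply' _ (measurable_trunc _) _ (hS n)).symm
    _ = chain κ x m n y (S n) := by rw [chain_map_trunc_succ κ x hκ h]

include hS hdec in
lemma F_anti (m : ℕ) (y : Pre X m) : Antitone fun k => F κ x S m (m + k) y := by
  refine antitone_nat_of_succ_le fun k => ?_
  exact F_succ_le hκ hS hdec (Nat.le_add_right m k) y

omit hκ in
include hS in
lemma measurable_hfun (m : ℕ) : Measurable (hfun κ x S m) :=
  Measurable.iInf fun k => measurable_F hS m (m + k)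

include hS hdec in
lemma hfun_eq (m : ℕ) (y : Pre X m) :
    hfun κ x S m y = ⨅ k, F κ x S m ((m + 1) + k) y := by
  refine le_antisymm (le_iInf fun k => ?_) (le_iInf fun k => ?_)
  · refine iInf_le_of_le (k + 1) (le_of_eq ?_)
    rw [show m + (k + 1) = m + 1 + k by omega]
  · refine iInf_le_of_le k ?_
    rw [show m + 1 + k = m + (k + 1) by omega]
    exact F_anti hκ hS hdec m y (Nat.le_succ k)

include hS hdec in
lemma hfun_tower (m : ℕ) (y : Pre X m) :
    hfun κ x S m y = ∫⁻ z, hfun κ x S (m + 1) (el m (y, z)) ∂(auxk κ m (x, y)) := by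
  have hsM := stepk_isMarkov κ x hκ m
  have hcM : ∀ n, IsMarkovKernel (chain κ x (m + 1) n) := chain_isMarkov κ x hκ (m + 1)
  have h1 : ∀ k, F κ x S m ((m + 1) + k) y
      = ∫⁻ w, F κ x S (m + 1) ((m + 1) + k) w ∂(stepk κ x m y) := by
    intro k
    rw [F, chain_comp κ x hκ (by omega), Kernel.comp_apply' _ _ _ (hS _)]
    rfl
  have hfin : ∫⁻ w, F κ x S (m + 1) ((m + 1) + 0) w ∂(stepk κ x m y) ≠ ⊤ := by
    refine ne_top_of_le_ne_top ENNReal.one_ne_top ?_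
    calc ∫⁻ w, F κ x S (m + 1) ((m + 1) + 0) w ∂(stepk κ x m y)
        ≤ ∫⁻ _, 1 ∂(stepk κ x m y) := lintegral_mono fun w => F_le_one hκ _ _ w
      _ = 1 := by rw [lintegral_one, measure_univ]
  rw [hfun_eq hκ hS hdec]
  simp_rw [h1]
  rw [← lintegral_iInf (fun k => measurable_F hS (m + 1) ((m + 1) + k))
      (fun a b hab => fun w => F_anti hκ hS hdec (m + 1) w hab) hfin]
  have hc : Measurable fun z : X (m + 1) => el m (y, z) :=
    (measurable_el m).comp measurable_prodMk_left
  have hrfl : ∀ a, (⨅ k, F κ x S (m + 1) ((m + 1) + k) a) = hfun κ x S (m + 1) a :=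
    fun _ => rfl
  simp_rw [hrfl]
  rw [stepk_apply κ x hκ, lintegral_map (measurable_hfun hS (m + 1)) hc]

include hS hdec in
lemma hfun_pos_step {m : ℕ} {y : Pre X m} (hpos : 0 < hfun κ x S m y) :
    ∃ z, 0 < hfun κ x S (m + 1) (el m (y, z)) := by
  by_contra hcon
  push_neg at hcon
  have hz : ∀ z, hfun κ x S (m + 1) (el m (y, z)) = 0 :=
    fun z => le_antisymm (hcon z) zero_le
  rw [hfun_tower hκ hS hdec] at hpos
  simp only [hz, lintegral_zero] at hpos
  exact lt_irrefl 0 hpos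

omit hκ in
include hS in
lemma mem_of_hfun_pos {n : ℕ} {y : Pre X n} (hpos : 0 < hfun κ x S n y) : y ∈ S n := by
  have h1 : hfun κ x S n y ≤ F κ x S n n y := iInf_le (fun k => F κ x S n (n + k) y) 0
  rw [F, chain_self, Kernel.id_apply, Measure.dirac_apply' _ (hS n)] at h1
  by_contra hmem
  rw [Set.indicator_of_notMem hmem] at h1
  exact lt_irrefl 0 (lt_of_lt_of_le hpos h1)

include hκ hS hdec in
lemma exists_point {ε : ℝ≥0∞} (hε : 0 < ε)
    (hbound : ∀ n, ε ≤ iteratedCompProd κ n x (S n)) :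
    ∃ f : Π i : ℕ, X (i + 1), ∀ n, res n f ∈ S n := by
  have hbase : 0 < hfun κ x S 0 z0 := by
    refine lt_of_lt_of_le hε (le_iInf fun k => ?_)
    rw [F, ← itcp_eq_chain κ x hκ, Nat.zero_add]
    exact hbound k
  have hstep : ∀ m (y : Pre X m), 0 < hfun κ x S m y →
      ∃ z, 0 < hfun κ x S (m + 1) (el m (y, z)) := fun m y h => hfun_pos_step hκ hS hdec h
  let Y : ∀ m, {y : Pre X m // 0 < hfun κ x S m y} := fun m =>
    Nat.rec ⟨z0, hbase⟩
      (fun m p => ⟨el m (p.1, (hstep m p.1 p.2).choose), (hstep m p.1 p.2).choose_spec⟩) m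
  have hco : ∀ m, trunc (Nat.le_succ m) (Y (m + 1)).1 = (Y m).1 := by
    intro m
    exact trunc_el _
  refine ⟨fun i => (Y (i + 1)).1 (Fin.last i), fun n => ?_⟩
  have hres : ∀ m, res m (fun i => (Y (i + 1)).1 (Fin.last i)) = (Y m).1 := by
    intro m
    induction m with
    | zero => funext i; exact i.elim0
    | succ m ih =>
        funext i
        induction i using Fin.lastCases with
        | last => rfl
        | cast j =>
            have h1 : res (m + 1) (fun i => (Y (i + 1)).1 (Fin.last i)) (Fin.castSucc j)
                = res m (fun i => (Y (i + 1)).1 (Fin.last i)) j := rfl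
            rw [h1, ih, ← hco m]
            rfl
  rw [hres n]
  exact mem_of_hfun_pos hS (Y n).2

end Key

section Content
variable (κ : ∀ n, Kernel (Π i : Fin (n + 1), X i) (X (n + 1))) (x : X 0)

lemma res_surjective (hne : ∀ i, Nonempty (X i)) (n : ℕ) :
    Function.Surjective (res (X := X) n) := by
  intro y
  refine ⟨fun i => if h : i < n then y ⟨i, h⟩ else (hne (i + 1)).some, ?_⟩
  funext i
  exact dif_pos i.isLt

lemma core_eq (hne : ∀ i, Nonempty (X i)) {m : ℕ} {A B : Set (Pre X m)}
    (h : res m ⁻¹' A = res m ⁻¹' B) : A = B :=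
  (Set.preimage_eq_preimage (res_surjective hne m)).mp h

lemma core_subset (hne : ∀ i, Nonempty (X i)) {m : ℕ} {A B : Set (Pre X m)}
    (h : res m ⁻¹' A ⊆ res m ⁻¹' B) : A ⊆ B := by
  intro a ha
  obtain ⟨f, rfl⟩ := res_surjective hne m a
  exact h ha

lemma res_preimage_eq {n m : ℕ} (h : n ≤ m) (S : Set (Pre X n)) :
    res (X := X) n ⁻¹' S = res m ⁻¹' (trunc h ⁻¹' S) := rfl

lemma itcp_trunc_apply (hκ : ∀ n, IsMarkovKernel (κ n)) {n m : ℕ} (h : n ≤ m)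
    {S : Set (Pre X n)} (hS : MeasurableSet S) :
    iteratedCompProd κ m x (trunc h ⁻¹' S) = iteratedCompProd κ n x S := by
  rw [← Kernel.map_apply' _ (measurable_trunc h) _ hS, itcp_map_trunc κ hκ h]

lemma itcp_core_eq (hκ : ∀ n, IsMarkovKernel (κ n)) (hne : ∀ i, Nonempty (X i))
    {n m : ℕ} {S : Set (Pre X n)} {T : Set (Pre X m)}
    (hS : MeasurableSet S) (hT : MeasurableSet T) (h : res n ⁻¹' S = res m ⁻¹' T) :
    iteratedCompProd κ n x S = iteratedCompProd κ m x T := by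
  rcases le_total n m with hnm | hmn
  · rw [res_preimage_eq hnm] at h
    rw [← core_eq hne h, itcp_trunc_apply κ x hκ hnm hS]
  · rw [res_preimage_eq hmn (S := T)] at h
    rw [core_eq hne h, itcp_trunc_apply κ x hκ hmn hT]

/-- the content associated to the projective family given by `iteratedCompProd`:
it is infinite outside cylinders. -/
noncomputable def contFun : Set (Π i : ℕ, X (i + 1)) → ℝ≥0∞ := fun s =>
  ⨅ (n : ℕ) (S : Set (Pre X n)) (_ : MeasurableSet S ∧ s = res n ⁻¹' S),
    iteratedCompProd κ n x S

lemma contFun_le {n : ℕ} {S : Set (Pre X n)} (hSm : MeasurableSet S) :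
    contFun κ x (res n ⁻¹' S) ≤ iteratedCompProd κ n x S :=
  iInf_le_of_le n (iInf_le_of_le S (iInf_le _ ⟨hSm, rfl⟩))

lemma contFun_cylinder (hκ : ∀ n, IsMarkovKernel (κ n)) (hne : ∀ i, Nonempty (X i))
    {n : ℕ} {S : Set (Pre X n)} (hSm : MeasurableSet S) :
    contFun κ x (res n ⁻¹' S) = iteratedCompProd κ n x S := by
  refine le_antisymm (contFun_le κ x hSm) ?_
  refine le_iInf fun m => le_iInf fun T => le_iInf fun hT => ?_
  exact (itcp_core_eq κ x hκ hne hSm hT.1 hT.2).le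

lemma contFun_empty : contFun κ x ∅ = 0 := by
  have h : (∅ : Set (Π i : ℕ, X (i + 1))) = res 0 ⁻¹' (∅ : Set (Pre X 0)) := by
    rw [Set.preimage_empty]
  refine le_antisymm ?_ zero_le
  rw [h]
  exact (contFun_le κ x MeasurableSet.empty).trans_eq (measure_empty)

lemma exists_rep_of_ne_top {s : Set (Π i : ℕ, X (i + 1))} (h : contFun κ x s ≠ ⊤) :
    ∃ n S, MeasurableSet S ∧ s = res n ⁻¹' S := by
  by_contra hc
  push_neg at hc
  refine h (le_antisymm le_top ?_)
  refine le_iInf fun n => le_iInf fun S => le_iInf fun hS => ?_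
  exact absurd hS.2 (hc n S hS.1)

end Content

section Vanish
variable (κ : ∀ n, Kernel (Π i : Fin (n + 1), X i) (X (n + 1))) (x : X 0)

lemma cont_to_zero (hκ : ∀ n, IsMarkovKernel (κ n)) (hne : ∀ i, Nonempty (X i))
    (B : ℕ → Set (Π i : ℕ, X (i + 1))) (L : ℕ → ℕ) (core : ∀ k, Set (Pre X (L k)))
    (hcore : ∀ k, MeasurableSet (core k)) (hrep : ∀ k, B k = res (L k) ⁻¹' core k)
    (hdec : ∀ k, B (k + 1) ⊆ B k) (hempty : ⋂ k, B k = ∅) {ε : ℝ≥0∞} (hε : 0 < ε) :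
    ∃ k, iteratedCompProd κ (L k) x (core k) < ε := by
  by_contra hcon
  push_neg at hcon
  have hBanti : ∀ {k l : ℕ}, k ≤ l → B l ⊆ B k := by
    intro k l hkl
    exact antitone_nat_of_succ_le hdec hkl
  set S' : ∀ N, Set (Pre X N) := fun N =>
    ⋂ (k : ℕ) (_ : k ≤ N) (hL : L k ≤ N), trunc hL ⁻¹' core k with hS'def
  have hS' : ∀ N, MeasurableSet (S' N) := fun N =>
    MeasurableSet.iInter fun k => MeasurableSet.iInter fun _ =>
      MeasurableSet.iInter fun hL => (measurable_trunc hL) (hcore k)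
  have hdec' : ∀ N, S' (N + 1) ⊆ trunc (Nat.le_succ N) ⁻¹' S' N := by
    intro N y hy
    simp only [hS'def, Set.mem_preimage, Set.mem_iInter] at hy ⊢
    intro k hk hL
    exact hy k (le_trans hk (Nat.le_succ N)) (le_trans hL (Nat.le_succ N))
  have hBC : ∀ N, B N ⊆ res N ⁻¹' S' N := by
    intro N b hb
    simp only [hS'def, Set.mem_preimage, Set.mem_iInter]
    intro k hk hL
    have : b ∈ B k := hBanti hk hb
    rw [hrep k] at this
    exact this
  have hbound : ∀ N, ε ≤ iteratedCompProd κ N x (S' N) := by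
    intro N
    set M := max N (L N) with hM
    have h1 : L N ≤ M := le_max_right _ _
    have h2 : N ≤ M := le_max_left _ _
    have hsub : trunc h1 ⁻¹' core N ⊆ trunc h2 ⁻¹' S' N := by
      refine core_subset hne (A := trunc h1 ⁻¹' core N) (B := trunc h2 ⁻¹' S' N) ?_
      rw [← res_preimage_eq h1, ← res_preimage_eq h2, ← hrep N]
      exact hBC N
    calc ε ≤ iteratedCompProd κ (L N) x (core N) := hcon N
      _ = iteratedCompProd κ M x (trunc h1 ⁻¹' core N) :=
          (itcp_trunc_apply κ x hκ h1 (hcore N)).symm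
      _ ≤ iteratedCompProd κ M x (trunc h2 ⁻¹' S' N) := measure_mono hsub
      _ = iteratedCompProd κ N x (S' N) := itcp_trunc_apply κ x hκ h2 (hS' N)
  obtain ⟨f, hf⟩ := exists_point hκ hS' hdec' hε hbound
  have hfB : ∀ k, f ∈ B k := by
    intro k
    have hN := hf (max k (L k))
    simp only [hS'def, Set.mem_iInter] at hN
    have := hN k (le_max_left _ _) (le_max_right _ _)
    rw [hrep k]
    exact this
  have : f ∈ ⋂ k, B k := Set.mem_iInter.mpr hfB
  rw [hempty] at this
  exact this

end Vanish

section Subadd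
variable (κ : ∀ n, Kernel (Π i : Fin (n + 1), X i) (X (n + 1))) (x : X 0)

set_option maxHeartbeats 2000000 in
lemma cont_sigma_subadd (hκ : ∀ n, IsMarkovKernel (κ n)) (hne : ∀ i, Nonempty (X i))
    {n : ℕ} {S : Set (Pre X n)} (hSm : MeasurableSet S)
    (f : ℕ → Set (Π i : ℕ, X (i + 1))) (hcover : res n ⁻¹' S ⊆ ⋃ i, f i) :
    iteratedCompProd κ n x S ≤ ∑' i, contFun κ x (f i) := by
  classical
  by_cases htop : ∃ i, contFun κ x (f i) = ⊤
  · obtain ⟨i, hi⟩ := htop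
    have h1 := ENNReal.le_tsum (f := fun i => contFun κ x (f i)) i
    rw [hi] at h1
    exact le_trans le_top h1
  push_neg at htop
  choose m T hTm hTe using fun i => exists_rep_of_ne_top κ x (htop i)
  set L : ℕ → ℕ := fun k => max n (Finset.sup (Finset.range k) m) with hL
  have hn : ∀ k, n ≤ L k := fun k => le_max_left _ _
  have hm : ∀ k i, i ∈ Finset.range k → m i ≤ L k := fun k i hi =>
    le_trans (Finset.le_sup hi) (le_max_right _ _)
  set D : ∀ k i, Set (Pre X (L k)) := fun k i =>
    if h : i ∈ Finset.range k then trunc (hm k i h) ⁻¹' T i else ∅ with hDdef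
  have hDm : ∀ k i, MeasurableSet (D k i) := by
    intro k i
    by_cases h : i ∈ Finset.range k
    · have : D k i = trunc (hm k i h) ⁻¹' T i := dif_pos h
      rw [this]
      exact (measurable_trunc _) (hTm i)
    · have : D k i = ∅ := dif_neg h
      rw [this]
      exact MeasurableSet.empty
  set core : ∀ k, Set (Pre X (L k)) := fun k =>
    (trunc (hn k) ⁻¹' S) \ ⋃ i ∈ Finset.range k, D k i with hcoredef
  have hcore : ∀ k, MeasurableSet (core k) := by
    intro k
    refine MeasurableSet.diff ((measurable_trunc _) hSm) ?_
    exact MeasurableSet.iUnion fun i => MeasurableSet.iUnion fun _ => hDm k i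
  set B : ℕ → Set (Π i : ℕ, X (i + 1)) := fun k =>
    (res n ⁻¹' S) \ ⋃ (i : ℕ) (_ : i ∈ Finset.range k), f i with hBdef
  have hrep : ∀ k, B k = res (L k) ⁻¹' core k := by
    intro k
    simp only [hBdef, hcoredef, Set.preimage_diff, Set.preimage_iUnion,
      ← res_preimage_eq]
    congr 1
    refine Set.iUnion_congr fun i => Set.iUnion_congr fun hi => ?_
    have : D k i = trunc (hm k i hi) ⁻¹' T i := dif_pos hi
    rw [this, ← res_preimage_eq]
    exact hTe i
  have hdec : ∀ k, B (k + 1) ⊆ B k := by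
    intro k y hy
    refine ⟨hy.1, fun hmem => hy.2 ?_⟩
    simp only [Set.mem_iUnion] at hmem ⊢
    obtain ⟨i, hi, hyi⟩ := hmem
    exact ⟨i, Finset.mem_range.mpr (lt_trans (Finset.mem_range.mp hi) (Nat.lt_succ_self k)), hyi⟩
  have hempty : ⋂ k, B k = ∅ := by
    rw [Set.eq_empty_iff_forall_notMem]
    intro y hy
    have hy1 : y ∈ res n ⁻¹' S := (Set.mem_iInter.mp hy 0).1
    obtain ⟨i, hyi⟩ := Set.mem_iUnion.mp (hcover hy1)
    refine (Set.mem_iInter.mp hy (i + 1)).2 ?_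
    exact Set.mem_iUnion.mpr ⟨i, Set.mem_iUnion.mpr
      ⟨Finset.mem_range.mpr (Nat.lt_succ_self i), hyi⟩⟩
  refine ENNReal.le_of_forall_pos_le_add fun ε hε _ => ?_
  obtain ⟨k, hk⟩ := cont_to_zero κ x hκ hne B L core hcore hrep hdec hempty
    (ε := (ε : ℝ≥0∞)) (ENNReal.coe_pos.mpr hε)
  have hsplit : trunc (hn k) ⁻¹' S ⊆ core k ∪ ⋃ i ∈ Finset.range k, D k i :=
    Set.subset_diff_union _ _
  calc iteratedCompProd κ n x S
      = iteratedCompProd κ (L k) x (trunc (hn k) ⁻¹' S) :=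
        (itcp_trunc_apply κ x hκ (hn k) hSm).symm
    _ ≤ iteratedCompProd κ (L k) x (core k ∪ ⋃ i ∈ Finset.range k, D k i) :=
        measure_mono hsplit
    _ ≤ iteratedCompProd κ (L k) x (core k) + iteratedCompProd κ (L k) x
        (⋃ i ∈ Finset.range k, D k i) := measure_union_le _ _
    _ ≤ (ε : ℝ≥0∞) + ∑ i ∈ Finset.range k, iteratedCompProd κ (L k) x (D k i) :=
        add_le_add hk.le (measure_biUnion_finset_le _ _)
    _ ≤ (ε : ℝ≥0∞) + ∑ i ∈ Finset.range k, contFun κ x (f i) := by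
        refine add_le_add le_rfl (Finset.sum_le_sum fun i hi => ?_)
        have hD : D k i = trunc (hm k i hi) ⁻¹' T i := dif_pos hi
        rw [hD, itcp_trunc_apply κ x hκ (hm k i hi) (hTm i),
          hTe i, contFun_cylinder κ x hκ hne (hTm i)]
    _ ≤ (ε : ℝ≥0∞) + ∑' i, contFun κ x (f i) :=
        add_le_add le_rfl (ENNReal.sum_le_tsum _)
    _ = ∑' i, contFun κ x (f i) + (ε : ℝ≥0∞) := add_comm _ _

/-- outer measure induced by the content. -/
noncomputable def om : OuterMeasure (Π i : ℕ, X (i + 1)) :=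
  OuterMeasure.ofFunction (contFun κ x) (contFun_empty κ x)

lemma om_cylinder (hκ : ∀ n, IsMarkovKernel (κ n)) (hne : ∀ i, Nonempty (X i))
    {n : ℕ} {S : Set (Pre X n)} (hSm : MeasurableSet S) :
    om κ x (res n ⁻¹' S) = iteratedCompProd κ n x S := by
  refine le_antisymm ((OuterMeasure.ofFunction_le _).trans_eq
    (contFun_cylinder κ x hκ hne hSm)) ?_
  rw [om, OuterMeasure.ofFunction_apply]
  exact le_iInf fun f => le_iInf fun hcover => cont_sigma_subadd κ x hκ hne hSm f hcover

lemma isCaratheodory_cylinder (hκ : ∀ n, IsMarkovKernel (κ n)) (hne : ∀ i, Nonempty (X i))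
    {n : ℕ} {S : Set (Pre X n)} (hSm : MeasurableSet S) :
    MeasurableSet[(om κ x).caratheodory] (res n ⁻¹' S) := by
  refine OuterMeasure.ofFunction_caratheodory fun t => ?_
  by_cases ht : contFun κ x t = ⊤
  · rw [ht]; exact le_top
  obtain ⟨p, T, hTm, rfl⟩ := exists_rep_of_ne_top κ x ht
  have h1 : n ≤ max n p := le_max_left _ _
  have h2 : p ≤ max n p := le_max_right _ _
  have e1 : res p ⁻¹' T ∩ res n ⁻¹' S
      = res (max n p) ⁻¹' (trunc h2 ⁻¹' T ∩ trunc h1 ⁻¹' S) := by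
    rw [res_preimage_eq h1 S, res_preimage_eq h2 T, Set.preimage_inter]
  have e2 : res p ⁻¹' T \ res n ⁻¹' S
      = res (max n p) ⁻¹' (trunc h2 ⁻¹' T \ trunc h1 ⁻¹' S) := by
    rw [res_preimage_eq h1 S, res_preimage_eq h2 T, Set.preimage_diff]
  rw [e1, e2, contFun_cylinder κ x hκ hne (((measurable_trunc h2) hTm).inter
      ((measurable_trunc h1) hSm)),
    contFun_cylinder κ x hκ hne (((measurable_trunc h2) hTm).diff
      ((measurable_trunc h1) hSm)),
    contFun_cylinder κ x hκ hne hTm,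
    ← itcp_trunc_apply κ x hκ h2 hTm,
    measure_inter_add_diff _ ((measurable_trunc h1) hSm)]

end Subadd

section MeasureConstr
variable (κ : ∀ n, Kernel (Π i : Fin (n + 1), X i) (X (n + 1)))

/-- initial-segment measurable cylinders -/
def Cyl (X : ℕ → Type*) [∀ n, MeasurableSpace (X n)] : Set (Set (Π i : ℕ, X (i + 1))) :=
  {s | ∃ n, ∃ S : Set (Pre X n), MeasurableSet S ∧ s = res n ⁻¹' S}

lemma isPiSystem_cyl : IsPiSystem (Cyl X) := by
  rintro s ⟨n, S, hS, rfl⟩ t ⟨m, T, hT, rfl⟩ -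
  refine ⟨max n m, trunc (le_max_left n m) ⁻¹' S ∩ trunc (le_max_right n m) ⁻¹' T,
    ((measurable_trunc _) hS).inter ((measurable_trunc _) hT), ?_⟩
  rw [Set.preimage_inter, ← res_preimage_eq, ← res_preimage_eq]

lemma eval_preimage_cyl (i : ℕ) {A : Set (X (i + 1))} (hA : MeasurableSet A) :
    (fun f : Π j : ℕ, X (j + 1) => f i) ⁻¹' A ∈ Cyl X :=
  ⟨i + 1, {y : Pre X (i + 1) | y (Fin.last i) ∈ A}, measurable_pi_apply (Fin.last i) hA, rfl⟩

lemma generateFrom_cyl :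
    (MeasurableSpace.pi : MeasurableSpace (Π i : ℕ, X (i + 1)))
      = MeasurableSpace.generateFrom (Cyl X) := by
  refine le_antisymm (iSup_le fun i => ?_) (MeasurableSpace.generateFrom_le ?_)
  · rw [← measurable_iff_comap_le]
    intro A hA
    exact MeasurableSpace.measurableSet_generateFrom (eval_preimage_cyl i hA)
  · rintro s ⟨n, S, hS, rfl⟩
    exact (measurable_res n) hS

variable (x : X 0)

/-- the Ionescu-Tulcea measure started at `x`. -/
noncomputable def muX (hκ : ∀ n, IsMarkovKernel (κ n)) (hne : ∀ i, Nonempty (X i)) :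
    Measure (Π i : ℕ, X (i + 1)) :=
  (om κ x).toMeasure (by
    rw [show (MeasurableSpace.pi : MeasurableSpace (Π i : ℕ, X (i + 1)))
          = MeasurableSpace.generateFrom (Cyl X) from generateFrom_cyl]
    refine MeasurableSpace.generateFrom_le ?_
    rintro s ⟨n, S, hS, rfl⟩
    exact isCaratheodory_cylinder κ x hκ hne hS)

variable (hκ : ∀ n, IsMarkovKernel (κ n)) (hne : ∀ i, Nonempty (X i))

lemma muX_cylinder {n : ℕ} {S : Set (Pre X n)} (hSm : MeasurableSet S) :
    muX κ x hκ hne (res n ⁻¹' S) = iteratedCompProd κ n x S := by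
  rw [muX, toMeasure_apply _ _ ((measurable_res n) hSm),
    om_cylinder κ x hκ hne hSm]

lemma muX_prob : IsProbabilityMeasure (muX κ x hκ hne) := by
  constructor
  have h : (Set.univ : Set (Π i : ℕ, X (i + 1))) = res 0 ⁻¹' Set.univ := by
    rw [Set.preimage_univ]
  rw [h, muX_cylinder κ x hκ hne MeasurableSet.univ]
  have := itcp_isMarkov κ hκ 0
  exact measure_univ

lemma muX_measurable : Measurable (fun x => muX κ x hκ hne) := by
  refine Measure.measurable_of_measurable_coe _ fun s hs => ?_
  refine MeasurableSpace.induction_on_inter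
    (C := fun t _ => Measurable fun x => muX κ x hκ hne t)
    (generateFrom_cyl (X := X)) isPiSystem_cyl ?_ ?_ ?_ ?_ s hs
  · simp only [measure_empty]; exact measurable_const
  · rintro t ⟨n, S, hS, rfl⟩
    have h : (fun x => muX κ x hκ hne (res n ⁻¹' S))
        = fun x => iteratedCompProd κ n x S := by
      funext x
      exact muX_cylinder κ x hκ hne hS
    rw [h]
    exact Kernel.measurable_coe _ hS
  · intro t htm iht
    have h : ∀ x, muX κ x hκ hne tᶜ = 1 - muX κ x hκ hne t := by
      intro x
      have := muX_prob κ x hκ hne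
      rw [measure_compl htm (measure_ne_top _ t), measure_univ]
    simp_rw [h]
    exact Measurable.const_sub iht 1
  · intro g hdisj hgm ihg
    have h : ∀ x, muX κ x hκ hne (⋃ i, g i) = ∑' i, muX κ x hκ hne (g i) := by
      intro x
      exact measure_iUnion hdisj hgm
    simp_rw [h]
    exact Measurable.ennreal_tsum ihg

/-- the Ionescu-Tulcea kernel. -/
noncomputable def xi : Kernel (X 0) (Π i : ℕ, X (i + 1)) :=
  ⟨fun x => muX κ x hκ hne, muX_measurable κ hκ hne⟩

lemma xi_apply : xi κ hκ hne x = muX κ x hκ hne := rfl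

end MeasureConstr
end IonescuTulceaProof

open IonescuTulceaProof in
/-- **The Ionescu-Tulcea theorem.** Given a family of Markov kernels
`κ n : (∏_{i=0}^n X i) ↝ X (n + 1)`, there exists a unique Markov kernel
`ξ : X 0 ↝ ∏_{i=1}^∞ X i` such that for every `n ≥ 1`, the pushforward of `ξ` by the projection
on the first `n` coordinates is the iterated composition-product `κ 0 ⊗ₖ ⋯ ⊗ₖ κ (n - 1)`. -/
theorem ionescuTulcea
    (κ : ∀ n, Kernel (Π i : Fin (n + 1), X i) (X (n + 1)))
    (hκ : ∀ n, IsMarkovKernel (κ n)) :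
    ∃! ξ : Kernel (X 0) (Π i : ℕ, X (i + 1)),
      IsMarkovKernel ξ ∧
        ∀ n : ℕ, 1 ≤ n →
          ξ.map (fun (f : Π i : ℕ, X (i + 1)) (i : Fin n) ↦ f i) = iteratedCompProd κ n := by
  by_cases hX0 : Nonempty (X 0)
  · -- the main case
    have key : ∀ n, Nonempty (Π i : Fin (n + 1), X i) → Nonempty (X (n + 1)) := by
      intro n hp
      obtain ⟨p⟩ := hp
      haveI := (hκ n).isProbabilityMeasure p
      by_contra h
      have hE : IsEmpty (X (n + 1)) := not_nonempty_iff.mp h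
      have h1 : (κ n p) Set.univ = 1 := measure_univ
      have h2 : (κ n p) Set.univ = 0 := by
        rw [Set.univ_eq_empty_iff.mpr hE]
        exact measure_empty
      exact zero_ne_one (h2 ▸ h1)
    have hne' : ∀ n, ∀ i ≤ n, Nonempty (X i) := by
      intro n
      induction n with
      | zero => intro i hi; rw [Nat.le_zero.mp hi]; exact hX0
      | succ n ih =>
          intro i hi
          rcases Nat.lt_succ_iff_lt_or_eq.mp (Nat.lt_succ_of_le hi) with h | h
          · exact ih i (Nat.lt_succ_iff.mp h)
          · subst h
            exact key n ⟨fun j => (ih j (Nat.lt_succ_iff.mp j.isLt)).some⟩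
    have hne : ∀ i, Nonempty (X i) := fun i => hne' i i le_rfl
    set ξ := xi κ hκ hne with hξ
    have hξmark : IsMarkovKernel ξ := ⟨fun x => muX_prob κ x hκ hne⟩
    have hmap : ∀ n, ξ.map (fun (f : Π i : ℕ, X (i + 1)) (i : Fin n) ↦ f i)
        = iteratedCompProd κ n := by
      intro n
      have hfun : (fun (f : Π i : ℕ, X (i + 1)) (i : Fin n) ↦ f i) = res (X := X) n := rfl
      rw [hfun]
      ext x s hs
      rw [Kernel.map_apply' _ (measurable_res n) _ hs, hξ, xi_apply, muX_cylinder κ x hκ hne hs]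
    refine ⟨ξ, ⟨hξmark, fun n _ => hmap n⟩, ?_⟩
    rintro ξ' ⟨hM', hmap'⟩
    have hcyl : ∀ (ζ : Kernel (X 0) (Π i : ℕ, X (i + 1))),
        (∀ n : ℕ, 1 ≤ n → ζ.map (fun (f : Π i : ℕ, X (i + 1)) (i : Fin n) ↦ f i)
          = iteratedCompProd κ n) →
        ∀ (x : X 0) (n : ℕ) (S : Set (Pre X n)), MeasurableSet S →
          ζ x (res n ⁻¹' S) = iteratedCompProd κ (n + 1) x (trunc (Nat.le_succ n) ⁻¹' S) := by
      intro ζ hζ x n S hS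
      have hfun : (fun (f : Π i : ℕ, X (i + 1)) (i : Fin (n + 1)) ↦ f i)
          = res (X := X) (n + 1) := rfl
      have h1 := hζ (n + 1) (Nat.succ_le_succ (Nat.zero_le n))
      rw [hfun] at h1
      rw [res_preimage_eq (Nat.le_succ n),
        ← Kernel.map_apply' _ (measurable_res (n + 1)) _ ((measurable_trunc _) hS), h1]
    ext x : 1
    haveI : IsProbabilityMeasure (ξ' x) := hM'.isProbabilityMeasure x
    haveI : IsProbabilityMeasure (ξ x) := hξmark.isProbabilityMeasure x
    refine ext_of_generate_finite (Cyl X) (generateFrom_cyl (X := X)) isPiSystem_cyl ?_ ?_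
    · rintro s ⟨n, S, hS, rfl⟩
      rw [hcyl ξ' hmap' x n S hS, hcyl ξ (fun n _ => hmap n) x n S hS]
    · rw [measure_univ, measure_univ]
  · -- degenerate case : `X 0` is empty
    have hE : IsEmpty (X 0) := not_nonempty_iff.mp hX0
    refine ⟨0, ⟨⟨fun a => hE.elim a⟩, fun n _ => Kernel.ext fun a => hE.elim a⟩,
      fun ξ' _ => Kernel.ext fun a => hE.elim a⟩
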